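/- The Werner–Holevo channel Φ : M_3(ℂ) → M_3(ℂ), defined by Φ(X) = (1/2)(tr(X) I_3 − X^t) where X^t is the transpose of X, is a quantum channel that is not mixed unitary: there do not exist r ∈ ℕ, reals p_i > 0 with Σ_{i=1}^r p_i = 1, and unitaries U_i ∈ M_3(ℂ) such that Φ(X) = Σ_{i=1}^r p_i U_i X U_i* for all X ∈ M_3(ℂ). -/

import Mathlib

open Matrix


noncomputable def a : ℂ := ((Real.sqrt 2)⁻¹ : ℝ)

lemma ha : a * a = 1/2 := by
  have h : (Real.sqrt 2)⁻¹ * (Real.sqrt 2)⁻¹ = (1/2 : ℝ) := by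
    rw [← mul_inv, Real.mul_self_sqrt (by norm_num)]; norm_num
  have := congrArg (Complex.ofReal) h
  simpa [a] using this

lemma ha2 : a ^ 2 = 1/2 := by rw [pow_two]; exact ha

lemma hsa : (starRingEnd ℂ) a = a := by unfold a; exact Complex.conj_ofReal _

lemma hsa' : star a = a := hsa

noncomputable def V : Fin 3 → Matrix (Fin 3) (Fin 3) ℂ :=
  ![!![0,a,0;-a,0,0;0,0,0], !![0,0,a;0,0,0;-a,0,0], !![0,0,0;0,0,a;0,-a,0]]

lemma WH_tp : ∑ i, (V i)ᴴ * V i = 1 := by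
  ext i j
  fin_cases i <;> fin_cases j <;>
    simp [V, Fin.sum_univ_succ, Matrix.mul_apply, Matrix.conjTranspose_apply, hsa, hsa',
      Matrix.one_apply] <;>
    linear_combination 2 * ha

set_option maxHeartbeats 1000000 in
lemma WH_kraus (X : Matrix (Fin 3) (Fin 3) ℂ) :
    (1 / 2 : ℂ) • (X.trace • (1 : Matrix (Fin 3) (Fin 3) ℂ) - Xᵀ)
      = ∑ i, V i * X * (V i)ᴴ := by
  ext i j
  fin_cases i <;> fin_cases j <;>
    simp only [V, Fin.sum_univ_succ, Fin.sum_univ_zero, Matrix.smul_apply, Matrix.sub_apply,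
      Matrix.add_apply, Matrix.mul_apply, Matrix.conjTranspose_apply, Matrix.transpose_apply,
      Matrix.one_apply, Matrix.trace, Matrix.diag, Matrix.cons_val', Matrix.cons_val_zero,
      Matrix.cons_val_one, Matrix.head_cons, Matrix.head_fin_const, Matrix.empty_val',
      Matrix.cons_val_fin_one, Matrix.cons_val_succ, map_neg, hsa, hsa', star_zero,
      Finset.sum_empty, smul_eq_mul, Fin.ext_iff]
  all_goals norm_num [Fin.ext_iff]
  all_goals ring_nf
  all_goals try simp only [show ((⟨2, by norm_num⟩ : Fin 3)) = 2 from rfl, Matrix.cons_val]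
  all_goals try simp only [hsa, hsa', map_zero]
  all_goals first
    | linear_combination (-(X 1 1 + X 2 2)) * ha
    | linear_combination (-(X 0 0 + X 2 2)) * ha
    | linear_combination (-(X 0 0 + X 1 1)) * ha
    | linear_combination (X 0 1) * ha
    | linear_combination (X 0 2) * ha
    | linear_combination (X 1 0) * ha
    | linear_combination (X 1 2) * ha
    | linear_combination (X 2 0) * ha
    | linear_combination (X 2 1) * ha

lemma pos_sum_zero {r : ℕ} (p : Fin r → ℝ) (hp : ∀ i, 0 < p i) (z : Fin r → ℂ)
    (h : ∑ i, (p i : ℂ) * (z i * (starRingEnd ℂ) (z i)) = 0) : ∀ i, z i = 0 := by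
  have h2 : ∑ i, (p i : ℂ) * (z i * (starRingEnd ℂ) (z i))
      = ((∑ i, p i * Complex.normSq (z i) : ℝ) : ℂ) := by
    push_cast
    refine Finset.sum_congr rfl fun i _ => ?_
    rw [Complex.mul_conj]
  rw [h2, Complex.ofReal_eq_zero] at h
  intro i
  have hterm := (Finset.sum_eq_zero_iff_of_nonneg
    (fun i _ => mul_nonneg (hp i).le (Complex.normSq_nonneg _))).mp h i (Finset.mem_univ i)
  have : Complex.normSq (z i) = 0 := by
    rcases mul_eq_zero.mp hterm with h' | h'
    · exact absurd h' (ne_of_gt (hp i))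
    · exact h'
  exact Complex.normSq_eq_zero.mp this

lemma quad_lhs (v : Fin 3 → ℂ) :
    v ⬝ᵥ (((1 / 2 : ℂ) • ((vecMulVec v (star v)).trace • (1 : Matrix (Fin 3) (Fin 3) ℂ)
      - (vecMulVec v (star v))ᵀ)) *ᵥ star v) = 0 := by
  simp [dotProduct, Matrix.mulVec, Matrix.vecMulVec_apply, Matrix.trace, Matrix.diag,
    Matrix.one_apply, Fin.sum_univ_succ, Pi.star_apply]
  ring

lemma quad_rhs (M : Matrix (Fin 3) (Fin 3) ℂ) (v : Fin 3 → ℂ) :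
    v ⬝ᵥ ((M * vecMulVec v (star v) * Mᴴ) *ᵥ star v)
      = (v ⬝ᵥ (M *ᵥ v)) * (starRingEnd ℂ) (v ⬝ᵥ (M *ᵥ v)) := by
  simp [dotProduct, Matrix.mulVec, Matrix.mul_apply, Matrix.vecMulVec_apply,
    Matrix.conjTranspose_apply, Fin.sum_univ_succ, Pi.star_apply, map_add, _root_.map_mul,
    Complex.star_def]
  ring

lemma key {r : ℕ} (p : Fin r → ℝ) (U : Fin r → Matrix (Fin 3) (Fin 3) ℂ)
    (hΦ : ∀ X : Matrix (Fin 3) (Fin 3) ℂ,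
      (1 / 2 : ℂ) • (X.trace • (1 : Matrix (Fin 3) (Fin 3) ℂ) - Xᵀ)
        = ∑ i, (p i : ℂ) • (U i * X * (U i)ᴴ))
    (v : Fin 3 → ℂ) :
    ∑ i, (p i : ℂ) * ((v ⬝ᵥ (U i *ᵥ v)) * (starRingEnd ℂ) (v ⬝ᵥ (U i *ᵥ v))) = 0 := by
  have h := congrArg (fun M : Matrix (Fin 3) (Fin 3) ℂ => v ⬝ᵥ (M *ᵥ star v))
    (hΦ (vecMulVec v (star v)))
  rw [quad_lhs] at h
  have hsum : (∑ i, (p i : ℂ) • (U i * vecMulVec v (star v) * (U i)ᴴ)) *ᵥ star v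
      = ∑ i, (p i : ℂ) • ((U i * vecMulVec v (star v) * (U i)ᴴ) *ᵥ star v) := by
    ext b
    simp only [Matrix.mulVec, dotProduct, Matrix.sum_apply, Matrix.smul_apply,
      Finset.sum_apply, Pi.smul_apply, smul_eq_mul, Finset.sum_mul, Finset.mul_sum]
    rw [Finset.sum_comm]
    exact Finset.sum_congr rfl fun i _ => Finset.sum_congr rfl fun b _ => by ring
  rw [hsum] at h
  have hdot : v ⬝ᵥ (∑ i, (p i : ℂ) • ((U i * vecMulVec v (star v) * (U i)ᴴ) *ᵥ star v))
      = ∑ i, (p i : ℂ) * (v ⬝ᵥ ((U i * vecMulVec v (star v) * (U i)ᴴ) *ᵥ star v)) := by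
    simp [dotProduct, Finset.sum_apply, Finset.mul_sum, dotProduct_smul,
      smul_eq_mul]
    rw [Finset.sum_comm]
    refine Finset.sum_congr rfl fun i _ => ?_
    refine Finset.sum_congr rfl fun b _ => ?_
    ring
  rw [hdot] at h
  rw [← h.symm]
  refine (Finset.sum_congr rfl fun i _ => ?_).symm
  rw [quad_rhs]

/-- The Werner–Holevo channel `Φ(X) = ½(tr(X) I₃ - Xᵀ)` on `M₃(ℂ)`
is a quantum channel (it admits a Kraus representation) but is not mixed unitary. -/
theorem wernerHolevo_channel_not_mixedUnitary :
    (∃ (d : ℕ) (V : Fin d → Matrix (Fin 3) (Fin 3) ℂ),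
      (∀ X : Matrix (Fin 3) (Fin 3) ℂ,
        (1 / 2 : ℂ) • (X.trace • (1 : Matrix (Fin 3) (Fin 3) ℂ) - Xᵀ)
          = ∑ i, V i * X * (V i)ᴴ) ∧
      ∑ i, (V i)ᴴ * V i = 1) ∧
    ¬ ∃ (r : ℕ) (p : Fin r → ℝ) (U : Fin r → Matrix (Fin 3) (Fin 3) ℂ),
        (∀ i, 0 < p i) ∧ (∑ i, p i = 1) ∧
        (∀ i, U i ∈ Matrix.unitaryGroup (Fin 3) ℂ) ∧
        (∀ X : Matrix (Fin 3) (Fin 3) ℂ,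
          (1 / 2 : ℂ) • (X.trace • (1 : Matrix (Fin 3) (Fin 3) ℂ) - Xᵀ)
            = ∑ i, (p i : ℂ) • (U i * X * (U i)ᴴ)) := by
  constructor
  · exact ⟨3, V, WH_kraus, WH_tp⟩
  · rintro ⟨r, p, U, hp, hpsum, hU, hΦ⟩
    have hr : r ≠ 0 := by rintro rfl; simp at hpsum
    obtain ⟨i⟩ : Nonempty (Fin r) := ⟨⟨0, Nat.pos_of_ne_zero hr⟩⟩
    have hq : ∀ v : Fin 3 → ℂ, v ⬝ᵥ (U i *ᵥ v) = 0 :=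
      fun v => pos_sum_zero p hp _ (key p U hΦ v) i
    have h00 : U i 0 0 = 0 := by
      have := hq ![1,0,0]
      simpa [dotProduct, Matrix.mulVec, Fin.sum_univ_succ] using this
    have h11 : U i 1 1 = 0 := by
      have := hq ![0,1,0]
      simpa [dotProduct, Matrix.mulVec, Fin.sum_univ_succ] using this
    have h22 : U i 2 2 = 0 := by
      have := hq ![0,0,1]
      simpa [dotProduct, Matrix.mulVec, Fin.sum_univ_succ] using this
    have e01 := hq ![1,1,0]
    have e02 := hq ![1,0,1]
    have e12 := hq ![0,1,1]
    simp [dotProduct, Matrix.mulVec, Fin.sum_univ_succ] at e01 e02 e12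
    have h10 : U i 1 0 = -U i 0 1 := by linear_combination e01 - h00 - h11
    have h20 : U i 2 0 = -U i 0 2 := by linear_combination e02 - h00 - h22
    have h21 : U i 2 1 = -U i 1 2 := by linear_combination e12 - h11 - h22
    have hdet0 : (U i).det = 0 := by
      rw [Matrix.det_fin_three, h00, h11, h22, h10, h20, h21]; ring
    have h1 : U i * star (U i) = 1 := Matrix.mem_unitaryGroup_iff.mp (hU i)
    have h2 := congrArg Matrix.det h1
    rw [Matrix.det_mul, hdet0, zero_mul, Matrix.det_one] at h2
    exact zero_ne_one h2
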